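/- Suppose G is a graph such that TS_2(G) is a forest containing an induced star K_{1,3} whose center is the independent set {a,b} and whose leaves are {a,c}, {b,d}, {a,e} for vertices a,b,c,d,e of G. Then the subgraph of G induced by {a,b,c,d,e} has edge set exactly {ad, de, eb, bc, cd}. -/

import Mathlib

open SimpleGraph

/-- `I` is a size-`k` independent set of `G`: a vertex of the token sliding graph. -/
def TSVert {W : Type*} (G : SimpleGraph W) (k : ℕ) (I : Finset W) : Prop :=
  I.card = k ∧ ∀ u ∈ I, ∀ v ∈ I, ¬ G.Adj u v

/-- The token sliding graph `TS_k(G)`: vertices are size-`k` independent sets of `G`,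
two sets adjacent iff they differ by sliding one token along an edge of `G`. -/
def TS {W : Type*} (G : SimpleGraph W) (k : ℕ) :
    SimpleGraph {I : Finset W // TSVert G k I} :=
  SimpleGraph.fromRel fun I J =>
    ∃ u v, ((I : Finset W) : Set W) \ ((J : Finset W) : Set W) = {u} ∧
      ((J : Finset W) : Set W) \ ((I : Finset W) : Set W) = {v} ∧ G.Adj u v

/-- `2K₂`: two disjoint edges, `0-1` and `2-3`. -/
def twoK2 : SimpleGraph (Fin 4) :=
  SimpleGraph.fromRel fun a b => (a = 0 ∧ b = 1) ∨ (a = 2 ∧ b = 3)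

/-- Disjoint union of two simple graphs. -/
def disjUnion' {α β : Type*} (G : SimpleGraph α) (H : SimpleGraph β) :
    SimpleGraph (α ⊕ β) :=
  SimpleGraph.fromRel fun a b =>
    (∃ x y, a = Sum.inl x ∧ b = Sum.inl y ∧ G.Adj x y) ∨
    (∃ x y, a = Sum.inr x ∧ b = Sum.inr y ∧ H.Adj x y)

/-- `nK₁`: `n` isolated vertices. -/
def nK1 (n : ℕ) : SimpleGraph (Fin n) := ⊥

/-- `D r n s`: the tree obtained from the path on `n` vertices by appending `r` leaves
at one endpoint and `s` leaves at the other endpoint. -/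
def D (r n s : ℕ) : SimpleGraph (Fin r ⊕ Fin n ⊕ Fin s) :=
  SimpleGraph.fromRel fun a b =>
    (∃ i j : Fin n, a = Sum.inr (Sum.inl i) ∧ b = Sum.inr (Sum.inl j) ∧ (j : ℕ) = (i : ℕ) + 1) ∨
    (∃ (u : Fin r) (i : Fin n), a = Sum.inl u ∧ b = Sum.inr (Sum.inl i) ∧ (i : ℕ) = 0) ∨
    (∃ (v : Fin s) (i : Fin n), a = Sum.inr (Sum.inr v) ∧ b = Sum.inr (Sum.inl i) ∧ (i : ℕ) = n - 1)

/-- The star `K_{1,s}`: center `0` with `s` leaves. -/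
def star' (s : ℕ) : SimpleGraph (Fin (s + 1)) :=
  SimpleGraph.fromRel fun a _ => a = 0

/-- `G` contains a cycle of length `n`. -/
def HasCycleLen {α : Type*} (G : SimpleGraph α) (n : ℕ) : Prop :=
  ∃ (v : α) (w : G.Walk v v), w.IsCycle ∧ w.length = n

/-- `G` contains a cycle. -/
def HasCycle {α : Type*} (G : SimpleGraph α) : Prop :=
  ∃ (v : α) (w : G.Walk v v), w.IsCycle

section Helpers

variable {V : Type*} [DecidableEq V] {G : SimpleGraph V}

lemma pair_sdiff {p q s : V} (hq : q ≠ p) (hqs : q ≠ s) :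
    ((({p, q} : Finset V) : Set V) \ (({p, s} : Finset V) : Set V)) = {q} := by
  ext x
  simp only [Finset.coe_insert, Finset.coe_singleton, Set.mem_diff, Set.mem_insert_iff,
    Set.mem_singleton_iff]
  constructor
  · rintro ⟨h | h, hn⟩
    · exact absurd (Or.inl h) hn
    · exact h
  · rintro rfl
    exact ⟨Or.inr rfl, by rintro (h | h); exacts [hq h, hqs h]⟩

lemma pair_ne {p q r s : V} (h1 : p ≠ r) (h2 : p ≠ s) : ({p, q} : Finset V) ≠ {r, s} := by
  intro h
  have : p ∈ ({r, s} : Finset V) := h ▸ Finset.mem_insert_self p {q}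
  simp only [Finset.mem_insert, Finset.mem_singleton] at this
  rcases this with h | h
  exacts [h1 h, h2 h]

lemma pair_ne' {p q r s : V} (h1 : q ≠ r) (h2 : q ≠ s) : ({p, q} : Finset V) ≠ {r, s} := by
  intro h
  have : q ∈ ({r, s} : Finset V) := h ▸ (by simp : q ∈ ({p, q} : Finset V))
  simp only [Finset.mem_insert, Finset.mem_singleton] at this
  rcases this with h | h
  exacts [h1 h, h2 h]

lemma tsvert_mk {x y : V} (hxy : x ≠ y) (h : ¬ G.Adj x y) : TSVert G 2 {x, y} := by
  refine ⟨by simp [hxy], ?_⟩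
  intro u hu v hv
  simp only [Finset.mem_insert, Finset.mem_singleton] at hu hv
  rcases hu with rfl | rfl <;> rcases hv with rfl | rfl <;>
    first
    | exact G.irrefl
    | exact h
    | exact fun h' => h h'.symm

lemma ts_adj_of {I J : Finset V} (h1 : TSVert G 2 I) (h2 : TSVert G 2 J)
    (u v : V) (hI : (I : Set V) \ (J : Set V) = {u}) (hJ : (J : Set V) \ (I : Set V) = {v})
    (huv : G.Adj u v) (hne : I ≠ J) : (TS G 2).Adj ⟨I, h1⟩ ⟨J, h2⟩ :=
  ⟨by simpa using hne, Or.inl ⟨u, v, hI, hJ, huv⟩⟩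

lemma ts_adj_elim {I J : Finset V} {h1 : TSVert G 2 I} {h2 : TSVert G 2 J}
    (h : (TS G 2).Adj ⟨I, h1⟩ ⟨J, h2⟩) {u v : V}
    (hI : (I : Set V) \ (J : Set V) = {u}) (hJ : (J : Set V) \ (I : Set V) = {v}) :
    G.Adj u v := by
  obtain ⟨-, h | h⟩ := h
  · obtain ⟨u', v', hu', hv', huv⟩ := h
    rw [hI, Set.singleton_eq_singleton_iff] at hu'
    rw [hJ, Set.singleton_eq_singleton_iff] at hv'
    rwa [← hu', ← hv'] at huv
  · obtain ⟨u', v', hu', hv', huv⟩ := h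
    rw [hJ, Set.singleton_eq_singleton_iff] at hu'
    rw [hI, Set.singleton_eq_singleton_iff] at hv'
    rw [← hu', ← hv'] at huv
    exact huv.symm

end Helpers

theorem stmt19 {V : Type*} [DecidableEq V] (G : SimpleGraph V) (a b c d e : V)
    (hne : [a, b, c, d, e].Pairwise (· ≠ ·))
    (hforest : (TS G 2).IsAcyclic)
    (hab : TSVert G 2 {a, b}) (hac : TSVert G 2 {a, c})
    (hbd : TSVert G 2 {b, d}) (hae : TSVert G 2 {a, e})
    (h1 : (TS G 2).Adj ⟨{a, b}, hab⟩ ⟨{a, c}, hac⟩)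
    (h2 : (TS G 2).Adj ⟨{a, b}, hab⟩ ⟨{b, d}, hbd⟩)
    (h3 : (TS G 2).Adj ⟨{a, b}, hab⟩ ⟨{a, e}, hae⟩)
    (h4 : ¬ (TS G 2).Adj ⟨{a, c}, hac⟩ ⟨{b, d}, hbd⟩)
    (h5 : ¬ (TS G 2).Adj ⟨{a, c}, hac⟩ ⟨{a, e}, hae⟩)
    (h6 : ¬ (TS G 2).Adj ⟨{b, d}, hbd⟩ ⟨{a, e}, hae⟩) :
    G.Adj a d ∧ G.Adj d e ∧ G.Adj e b ∧ G.Adj b c ∧ G.Adj c d ∧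
    ¬ G.Adj a b ∧ ¬ G.Adj a c ∧ ¬ G.Adj a e ∧ ¬ G.Adj b d ∧ ¬ G.Adj c e := by
  simp only [List.pairwise_cons, List.mem_cons, List.not_mem_nil, List.mem_singleton] at hne
  obtain ⟨ha, hb, hc, hd, -⟩ := hne
  have hab' : a ≠ b := ha b (by tauto)
  have hac' : a ≠ c := ha c (by tauto)
  have had' : a ≠ d := ha d (by tauto)
  have hae' : a ≠ e := ha e (by tauto)
  have hbc' : b ≠ c := hb c (by tauto)
  have hbd' : b ≠ d := hb d (by tauto)
  have hbe' : b ≠ e := hb e (by tauto)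
  have hcd' : c ≠ d := hc d (by tauto)
  have hce' : c ≠ e := hc e (by tauto)
  have hde' : d ≠ e := hd e (by tauto)
  -- extract edges from the three TS-adjacencies
  have hGbc : G.Adj b c :=
    ts_adj_elim h1 (pair_sdiff hab'.symm hbc') (pair_sdiff hac'.symm hbc'.symm)
  have hGad : G.Adj a d :=
    ts_adj_elim h2 (by rw [Finset.pair_comm a b]; exact pair_sdiff hab' had')
      (by rw [Finset.pair_comm a b]; exact pair_sdiff hbd'.symm had'.symm)
  have hGbe : G.Adj b e :=
    ts_adj_elim h3 (pair_sdiff hab'.symm hbe') (pair_sdiff hae'.symm hbe'.symm)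
  -- non-adjacencies from independence
  have hnab : ¬ G.Adj a b := hab.2 a (by simp) b (by simp)
  have hnac : ¬ G.Adj a c := hac.2 a (by simp) c (by simp)
  have hnae : ¬ G.Adj a e := hae.2 a (by simp) e (by simp)
  have hnbd : ¬ G.Adj b d := hbd.2 b (by simp) d (by simp)
  have hnce : ¬ G.Adj c e := fun h => h5 (ts_adj_of hac hae c e
    (pair_sdiff hac'.symm hce') (pair_sdiff hae'.symm hce'.symm) h (pair_ne' hac'.symm hce'))
  -- d ~ e, else the 4-cycle {a,b},{b,d},{d,e},{a,e}
  have hGde : G.Adj d e := by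
    by_contra hde
    have Ide : TSVert G 2 {d, e} := tsvert_mk hde' hde
    have eYZ : (TS G 2).Adj ⟨{b, d}, hbd⟩ ⟨{d, e}, Ide⟩ :=
      ts_adj_of hbd Ide b e (by rw [Finset.pair_comm b d]; exact pair_sdiff hbd' hbe')
        (by rw [Finset.pair_comm b d]; exact pair_sdiff hde'.symm hbe'.symm)
        hGbe (pair_ne hbd' hbe')
    have eWZ : (TS G 2).Adj ⟨{a, e}, hae⟩ ⟨{d, e}, Ide⟩ :=
      ts_adj_of hae Ide a d
        (by rw [Finset.pair_comm a e, Finset.pair_comm d e]; exact pair_sdiff hae' had')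
        (by rw [Finset.pair_comm a e, Finset.pair_comm d e]; exact pair_sdiff hde' had'.symm)
        hGad (pair_ne had' hae')
    let p : (TS G 2).Walk ⟨{a, b}, hab⟩ ⟨{d, e}, Ide⟩ := Walk.cons h2 (Walk.cons eYZ Walk.nil)
    let q : (TS G 2).Walk ⟨{a, b}, hab⟩ ⟨{d, e}, Ide⟩ := Walk.cons h3 (Walk.cons eWZ Walk.nil)
    have hp : p.IsPath := by
      rw [Walk.isPath_def]
      simp only [p, Walk.support_cons, Walk.support_nil, List.nodup_cons, List.mem_cons,
        List.mem_singleton, List.not_mem_nil, or_false, not_or, List.nodup_nil, and_true]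
      refine ⟨⟨?_, ?_⟩, ?_, not_false⟩ <;> (intro h; rw [Subtype.mk.injEq] at h) <;>
          first
          | exact pair_ne hab' had' h
          | exact pair_ne had' hae' h
          | exact pair_ne hbd' hbe' h
    have hq : q.IsPath := by
      rw [Walk.isPath_def]
      simp only [q, Walk.support_cons, Walk.support_nil, List.nodup_cons, List.mem_cons,
        List.mem_singleton, List.not_mem_nil, or_false, not_or, List.nodup_nil, and_true]
      refine ⟨⟨?_, ?_⟩, ?_, not_false⟩ <;> (intro h; rw [Subtype.mk.injEq] at h) <;>
          first
          | exact pair_ne' hab'.symm hbe' h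
          | exact pair_ne had' hae' h
    have heq := isAcyclic_iff_path_unique.mp hforest ⟨p, hp⟩ ⟨q, hq⟩
    have hsupp := congrArg (fun P : (TS G 2).Path _ _ => P.1.support) heq
    simp only [p, q, Walk.support_cons, Walk.support_nil, List.cons.injEq, and_true] at hsupp
    exact pair_ne hab'.symm hbe' (congrArg Subtype.val hsupp.2)
  -- c ~ d, else the 4-cycle {a,b},{a,c},{c,d},{b,d}
  have hGcd : G.Adj c d := by
    by_contra hcd
    have Icd : TSVert G 2 {c, d} := tsvert_mk hcd' hcd
    have eYZ : (TS G 2).Adj ⟨{a, c}, hac⟩ ⟨{c, d}, Icd⟩ :=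
      ts_adj_of hac Icd a d (by rw [Finset.pair_comm a c]; exact pair_sdiff hac' had')
        (by rw [Finset.pair_comm a c]; exact pair_sdiff hcd'.symm had'.symm)
        hGad (pair_ne hac' had')
    have eWZ : (TS G 2).Adj ⟨{b, d}, hbd⟩ ⟨{c, d}, Icd⟩ :=
      ts_adj_of hbd Icd b c
        (by rw [Finset.pair_comm b d, Finset.pair_comm c d]; exact pair_sdiff hbd' hbc')
        (by rw [Finset.pair_comm b d, Finset.pair_comm c d]; exact pair_sdiff hcd' hbc'.symm)
        hGbc (pair_ne hbc' hbd')
    let p : (TS G 2).Walk ⟨{a, b}, hab⟩ ⟨{c, d}, Icd⟩ := Walk.cons h1 (Walk.cons eYZ Walk.nil)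
    let q : (TS G 2).Walk ⟨{a, b}, hab⟩ ⟨{c, d}, Icd⟩ := Walk.cons h2 (Walk.cons eWZ Walk.nil)
    have hp : p.IsPath := by
      rw [Walk.isPath_def]
      simp only [p, Walk.support_cons, Walk.support_nil, List.nodup_cons, List.mem_cons,
        List.mem_singleton, List.not_mem_nil, or_false, not_or, List.nodup_nil, and_true]
      refine ⟨⟨?_, ?_⟩, ?_, not_false⟩ <;> (intro h; rw [Subtype.mk.injEq] at h) <;>
          first
          | exact pair_ne' hab'.symm hbc' h
          | exact pair_ne hac' had' h
    have hq : q.IsPath := by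
      rw [Walk.isPath_def]
      simp only [q, Walk.support_cons, Walk.support_nil, List.nodup_cons, List.mem_cons,
        List.mem_singleton, List.not_mem_nil, or_false, not_or, List.nodup_nil, and_true]
      refine ⟨⟨?_, ?_⟩, ?_, not_false⟩ <;> (intro h; rw [Subtype.mk.injEq] at h) <;>
          first
          | exact pair_ne hab' had' h
          | exact pair_ne hac' had' h
          | exact pair_ne hbc' hbd' h
    have heq := isAcyclic_iff_path_unique.mp hforest ⟨p, hp⟩ ⟨q, hq⟩
    have hsupp := congrArg (fun P : (TS G 2).Path _ _ => P.1.support) heq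
    simp only [p, q, Walk.support_cons, Walk.support_nil, List.cons.injEq, and_true] at hsupp
    exact pair_ne hab' had' (congrArg Subtype.val hsupp.2) -- {a,c} ≠ {b,d}
  exact ⟨hGad, hGde, hGbe.symm, hGbc, hGcd, hnab, hnac, hnae, hnbd, hnce⟩
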